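/- arXiv:1902.07390 — 3 statements merged into one kernel-verified Lean document; each statement's English description precedes it below -/
import Mathlib

section
/- Suppose $g : [1,\infty) \to \mathbb{R}$ is a differentiable positive function, $p > 1$, and there exist constants $C_2, C_3 > 0$ such that $g(t) \geq C_2 t^{3(p-1)/2}$ and $g'(t) \geq C_3 t^{3p(1-p)/2} g(t)^p$ for all $t \geq 1$. If moreover $3p(1-p)/2 \geq -1$ (equivalently $p \leq 1 + \frac{2}{3p}$), then a contradiction follows; i.e., no such function $g$ exists. -/
theorem stmt_3 (g : ℝ → ℝ) (p C2 C3 : ℝ) (hp : 1 < p) (hC2 : 0 < C2) (hC3 : 0 < C3)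
    (hdiff : ∀ t ≥ (1:ℝ), DifferentiableAt ℝ g t)
    (hpos : ∀ t ≥ (1:ℝ), 0 < g t)
    (hlb : ∀ t ≥ (1:ℝ), g t ≥ C2 * t ^ (3 * (p - 1) / 2))
    (hderiv : ∀ t ≥ (1:ℝ), deriv g t ≥ C3 * t ^ (3 * p * (1 - p) / 2) * g t ^ p)
    (hcrit : 3 * p * (1 - p) / 2 ≥ -1) : False := by
  set e : ℝ := 1 - p with he
  set α : ℝ := 3 * p * (1 - p) / 2 with hα
  set G : ℝ → ℝ := fun s => g s ^ e + (p - 1) * C3 * Real.log s with hG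
  have hpc : 0 < (p - 1) * C3 := mul_pos (by linarith) hC3
  have hg1 : 0 < g 1 ^ e := Real.rpow_pos_of_pos (hpos 1 le_rfl) e
  set x : ℝ := (g 1 ^ e + 1) / ((p - 1) * C3) with hx
  have hx0 : 0 < x := div_pos (by linarith) hpc
  set T : ℝ := Real.exp x with hT
  have hT1 : 1 < T := by
    rw [hT]
    calc (1:ℝ) = Real.exp 0 := (Real.exp_zero).symm
    _ < Real.exp x := Real.exp_lt_exp.mpr hx0
  have hGd : ∀ t ∈ Set.Ici (1:ℝ),
      HasDerivAt G (e * g t ^ (e - 1) * deriv g t + (p - 1) * C3 * t⁻¹) t := by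
    intro t ht
    have ht1 : (1:ℝ) ≤ t := ht
    have hgt := hpos t ht1
    have h1 : HasDerivAt (fun s => g s ^ e) (e * g t ^ (e - 1) * deriv g t) t := by
      have := (Real.hasDerivAt_rpow_const (p := e) (Or.inl hgt.ne')).comp t
        ((hdiff t ht1).hasDerivAt)
      convert this using 1
      all_goals rfl
    have h2 : HasDerivAt (fun s => (p - 1) * C3 * Real.log s) ((p - 1) * C3 * t⁻¹) t :=
      (Real.hasDerivAt_log (by linarith)).const_mul ((p - 1) * C3)
    exact h1.add h2
  have hanti : AntitoneOn G (Set.Ici 1) := by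
    apply antitoneOn_of_deriv_nonpos (convex_Ici 1)
    · exact fun t ht => (hGd t ht).continuousAt.continuousWithinAt
    · rw [interior_Ici]
      exact fun t ht => (hGd t (Set.mem_Ici.mpr (le_of_lt ht))).differentiableAt.differentiableWithinAt
    · intro t ht
      rw [interior_Ici] at ht
      rw [(hGd t (Set.mem_Ici.mpr ht.le)).deriv]
      have ht1 : (1:ℝ) ≤ t := ht.le
      have ht0 : (0:ℝ) < t := by linarith
      have hgt := hpos t ht1
      have hd := hderiv t ht1
      have hA : 0 < g t ^ p := Real.rpow_pos_of_pos hgt p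
      have hem : e - 1 = -p := by rw [he]; ring
      have hinv : g t ^ (e - 1) = (g t ^ p)⁻¹ := by
        rw [hem, Real.rpow_neg hgt.le]
      have htα : t⁻¹ ≤ t ^ α := by
        calc t⁻¹ = t ^ (-1 : ℝ) := (Real.rpow_neg_one t).symm
        _ ≤ t ^ α := Real.rpow_le_rpow_of_exponent_le ht1 hcrit
      have htinv : (0:ℝ) < t⁻¹ := inv_pos.mpr ht0
      have htαpos : (0:ℝ) < t ^ α := Real.rpow_pos_of_pos ht0 α
      rw [hinv]
      have hAinv : (g t ^ p)⁻¹ * (g t ^ p) = 1 := inv_mul_cancel₀ hA.ne'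
      have key : (g t ^ p)⁻¹ * deriv g t ≥ C3 * t ^ α := by
        have h1 : (g t ^ p)⁻¹ * deriv g t ≥ (g t ^ p)⁻¹ * (C3 * t ^ α * g t ^ p) :=
          mul_le_mul_of_nonneg_left hd (inv_pos.mpr hA).le
        calc C3 * t ^ α = (g t ^ p)⁻¹ * (C3 * t ^ α * g t ^ p) := by
              field_simp
        _ ≤ (g t ^ p)⁻¹ * deriv g t := h1
      have hep : e = -(p - 1) := by rw [he]; ring
      have h2 : (p - 1) * ((g t ^ p)⁻¹ * deriv g t) ≥ (p - 1) * (C3 * t⁻¹) := by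
        have hC3t : C3 * t⁻¹ ≤ C3 * t ^ α := mul_le_mul_of_nonneg_left htα hC3.le
        have := mul_le_mul_of_nonneg_left (le_trans hC3t key) (by linarith : (0:ℝ) ≤ p - 1)
        linarith
      nlinarith [h2]
  have hmem1 : (1:ℝ) ∈ Set.Ici (1:ℝ) := Set.mem_Ici.mpr le_rfl
  have hmemT : T ∈ Set.Ici (1:ℝ) := Set.mem_Ici.mpr hT1.le
  have hle : G T ≤ G 1 := hanti hmem1 hmemT hT1.le
  have hG1 : G 1 = g 1 ^ e := by simp [hG]
  have hlogT : Real.log T = x := Real.log_exp x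
  have hxval : (p - 1) * C3 * x = g 1 ^ e + 1 := by
    rw [hx]
    field_simp
    exact div_self (sub_pos.mpr hp).ne'
  have hgT : 0 < g T ^ e := Real.rpow_pos_of_pos (hpos T hT1.le) e
  have hGT : G T = g T ^ e + (g 1 ^ e + 1) := by
    rw [hG]
    simp only []
    rw [hlogT, hxval]
  rw [hG1, hGT] at hle
  linarith
end

section
/- Suppose $g : [2,\infty) \to \mathbb{R}$ is a differentiable positive function with $g(t) \geq C_7\, t \log t$ and $g'(t) \geq C\, t^{-5/3} g(t)^{5/3}$ for all $t \geq 2$, where $C_7, C > 0$. Then no such $g$ exists: integrating gives $\frac{3}{2} C_7^{-2/3} (t \log t)^{-2/3} \geq \frac{3C}{2}\left(t^{-2/3} - T^{-2/3}\right)$ for all $T > t \geq 2$, which fails for large $t$ after letting $T \to \infty$ since $(t\log t)^{-2/3} = o(t^{-2/3})$. -/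
theorem stmt_10 (g : ℝ → ℝ) (C7 C : ℝ) (hC7 : 0 < C7) (hC : 0 < C)
    (hdiff : ∀ t ≥ (2:ℝ), DifferentiableAt ℝ g t)
    (hpos : ∀ t ≥ (2:ℝ), 0 < g t)
    (hlb : ∀ t ≥ (2:ℝ), g t ≥ C7 * t * Real.log t)
    (hderiv : ∀ t ≥ (2:ℝ), deriv g t ≥ C * t ^ (-(5:ℝ) / 3) * g t ^ ((5:ℝ) / 3)) :
    False := by
  set c : ℝ := -(2:ℝ)/3 with hcdef
  clear_value c
  have hc1 : c - 1 = -(5:ℝ)/3 := by rw [hcdef]; norm_num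
  set F : ℝ → ℝ := fun x => g x ^ c - C * x ^ c with hFdef
  clear_value F
  have key : ∀ x ≥ (2:ℝ), HasDerivAt F
      (deriv g x * c * g x ^ (-(5:ℝ)/3) - C * (c * x ^ (-(5:ℝ)/3))) x := by
    intro x hx
    rw [hFdef]
    have hgx := hpos x hx
    have hdg : HasDerivAt g (deriv g x) x := (hdiff x hx).hasDerivAt
    have h1 : HasDerivAt (fun y => g y ^ c) (deriv g x * c * g x ^ (c - 1)) x :=
      hdg.rpow_const (Or.inl (ne_of_gt hgx))
    have h2 : HasDerivAt (fun y : ℝ => C * y ^ c) (C * (c * x ^ (c - 1))) x :=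
      (Real.hasDerivAt_rpow_const (Or.inl (by linarith))).const_mul C
    rw [hc1] at h1 h2
    exact h1.sub h2
  have hderiv_nonpos : ∀ x ∈ interior (Set.Ici (2:ℝ)), deriv F x ≤ 0 := by
    intro x hx
    rw [interior_Ici] at hx
    have hx2 : (2:ℝ) ≤ x := le_of_lt hx
    rw [(key x hx2).deriv]
    have hgx := hpos x hx2
    have hd := hderiv x hx2
    have hgpow : (0:ℝ) < g x ^ (-(5:ℝ)/3) := Real.rpow_pos_of_pos hgx _
    have hmul : C * x ^ (-(5:ℝ)/3) ≤ deriv g x * g x ^ (-(5:ℝ)/3) := by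
      have h1 : (C * x ^ (-(5:ℝ)/3) * g x ^ ((5:ℝ)/3)) * g x ^ (-(5:ℝ)/3)
          ≤ deriv g x * g x ^ (-(5:ℝ)/3) :=
        mul_le_mul_of_nonneg_right hd (le_of_lt hgpow)
      have h2 : (C * x ^ (-(5:ℝ)/3) * g x ^ ((5:ℝ)/3)) * g x ^ (-(5:ℝ)/3)
          = C * x ^ (-(5:ℝ)/3) := by
        rw [mul_assoc, ← Real.rpow_add hgx]
        norm_num
      linarith [h2 ▸ h1]
    rw [hcdef]
    nlinarith [hmul]
  have hcont : ContinuousOn F (Set.Ici (2:ℝ)) := fun x hx =>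
    ((key x hx).differentiableAt).continuousAt.continuousWithinAt
  have hdiffOn : DifferentiableOn ℝ F (interior (Set.Ici (2:ℝ))) := by
    intro x hx
    rw [interior_Ici] at hx
    exact ((key x (le_of_lt hx)).differentiableAt).differentiableWithinAt
  have hanti : AntitoneOn F (Set.Ici (2:ℝ)) :=
    antitoneOn_of_deriv_nonpos (convex_Ici 2) hcont hdiffOn hderiv_nonpos
  -- choose t
  set A : ℝ := C7 ^ c with hAdef
  clear_value A
  have hA : 0 < A := hAdef ▸ Real.rpow_pos_of_pos hC7 c
  set B : ℝ := 4 * A / (3 * C) + 1 with hBdef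
  clear_value B
  have hB0 : 0 < B := by rw [hBdef]; positivity
  have hB1 : 1 ≤ B := by
    have : 0 < 4 * A / (3 * C) := by positivity
    linarith
  set t : ℝ := Real.exp (max 1 (B ^ ((3:ℝ)/2))) with htdef
  clear_value t
  have hlogt : Real.log t = max 1 (B ^ ((3:ℝ)/2)) := by rw [htdef]; exact Real.log_exp _
  have hlogt1 : (1:ℝ) ≤ Real.log t := by rw [hlogt]; exact le_max_left _ _
  have ht2 : (2:ℝ) ≤ t := by
    have h1 : (1:ℝ) + 1 ≤ Real.exp 1 := by linarith [Real.add_one_le_exp (1:ℝ)]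
    have h2 : Real.exp 1 ≤ t := by rw [htdef]; exact Real.exp_le_exp.2 (le_max_left _ _)
    linarith
  have ht0 : (0:ℝ) < t := by linarith
  set T : ℝ := 8 * t with hTdef
  clear_value T
  have hT2 : (2:ℝ) ≤ T := by rw [hTdef]; linarith
  have htT : t ≤ T := by rw [hTdef]; linarith
  have hFle : F T ≤ F t := hanti (Set.mem_Ici.2 ht2) (Set.mem_Ici.2 hT2) htT
  have hgT : (0:ℝ) < g T ^ c := Real.rpow_pos_of_pos (hpos T hT2) c
  have htc : (0:ℝ) < t ^ c := Real.rpow_pos_of_pos ht0 c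
  -- T^c = t^c/4
  have h8 : (8:ℝ) ^ c = 1/4 := by
    have h2 : (8:ℝ) = (2:ℝ) ^ (3:ℝ) := by
      rw [show (3:ℝ) = ((3:ℕ):ℝ) by norm_num, Real.rpow_natCast]; norm_num
    rw [h2, ← Real.rpow_mul (by norm_num : (0:ℝ) ≤ 2), hcdef]
    rw [show (3:ℝ) * (-(2:ℝ)/3) = ((-2:ℤ):ℝ) by norm_num, Real.rpow_intCast]
    norm_num
  have hTc : T ^ c = 1/4 * t ^ c := by
    rw [hTdef, Real.mul_rpow (by norm_num) (le_of_lt ht0), h8]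
  -- g t ^ c bound
  have hlogt0 : (0:ℝ) < Real.log t := by linarith
  have hgt_ub : g t ^ c ≤ A * t ^ c * Real.log t ^ c := by
    have hlb' := hlb t ht2
    have hprod : (0:ℝ) < C7 * t * Real.log t := by positivity
    have h1 : g t ^ c ≤ (C7 * t * Real.log t) ^ c :=
      Real.rpow_le_rpow_of_nonpos hprod hlb' (by rw [hcdef]; norm_num)
    have h2 : (C7 * t * Real.log t) ^ c = A * t ^ c * Real.log t ^ c := by
      rw [Real.mul_rpow (by positivity) (le_of_lt hlogt0),
        Real.mul_rpow (le_of_lt hC7) (le_of_lt ht0), hAdef]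
    linarith [h2 ▸ h1]
  -- (log t)^c ≤ B⁻¹
  have hlogB : Real.log t ^ c ≤ B⁻¹ := by
    have hB32 : (0:ℝ) < B ^ ((3:ℝ)/2) := Real.rpow_pos_of_pos hB0 _
    have hge : B ^ ((3:ℝ)/2) ≤ Real.log t := by rw [hlogt]; exact le_max_right _ _
    have h1 : Real.log t ^ c ≤ (B ^ ((3:ℝ)/2)) ^ c :=
      Real.rpow_le_rpow_of_nonpos hB32 hge (by rw [hcdef]; norm_num)
    have h2 : (B ^ ((3:ℝ)/2)) ^ c = B⁻¹ := by
      rw [← Real.rpow_mul (le_of_lt hB0), hcdef,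
        show (3:ℝ)/2 * (-(2:ℝ)/3) = -1 by norm_num, Real.rpow_neg_one]
    linarith [h2 ▸ h1]
  -- combine
  have hchain : 3/4 * (C * t ^ c) < g t ^ c := by
    have h0 : g T ^ c - C * T ^ c ≤ g t ^ c - C * t ^ c := by
      simpa [hFdef] using hFle
    rw [hTc] at h0
    nlinarith
  have hfinal : 3/4 * C * t ^ c < A * t ^ c * B⁻¹ := by
    have h1 : A * t ^ c * Real.log t ^ c ≤ A * t ^ c * B⁻¹ :=
      mul_le_mul_of_nonneg_left hlogB (by positivity)
    nlinarith
  have hdiv : 3/4 * C < A * B⁻¹ := by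
    have := (mul_lt_mul_iff_of_pos_right htc).1 (by nlinarith : (3/4 * C) * t ^ c < (A * B⁻¹) * t ^ c)
    exact this
  have hBC : 3/4 * C * B = A + 3/4 * C := by
    rw [hBdef]; field_simp
  have h5 : 3/4 * C * B < A := by
    have h6 := mul_lt_mul_of_pos_right hdiv hB0
    have h7 : A * B⁻¹ * B = A := by
      field_simp
    rw [h7] at h6
    linarith
  linarith
end

section
/- Let $K(t,x_1,x_2) = \frac{1}{2\pi t^{3/2}}\exp(-x_1^2/t - x_2^2/t^2)$ for $t > 0$. Then for $0 < s < t$ and any $y \in \mathbb{R}^2$: $\int_{\mathbb{R}^2} K(t, x) K(t-s, x - y)\,dx \geq c\, \frac{s^{3/2}}{t^{3/2}} K(s, y)$ for some absolute constant $c > 0$. -/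
open Real MeasureTheory

noncomputable def K (t x1 x2 : ℝ) : ℝ :=
  1 / (2 * Real.pi * t ^ ((3:ℝ) / 2)) * Real.exp (-(x1 ^ 2 / t) - x2 ^ 2 / t ^ 2)

lemma exp_bd1 {s t : ℝ} (hs : 0 < s) (hst : s < t) (x1 y1 : ℝ) :
    x1 ^ 2 / t ≤ y1 ^ 2 / s + (x1 - y1) ^ 2 / (t - s) := by
  have ht : 0 < t := hs.trans hst
  have hb : 0 < t - s := by linarith
  rw [div_add_div _ _ (ne_of_gt hs) (ne_of_gt hb), div_le_div_iff₀ ht (by positivity)]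
  nlinarith [sq_nonneg ((t - s) * y1 - s * (x1 - y1))]

lemma exp_bd2 {s t : ℝ} (hs : 0 < s) (hst : s < t) (x2 y2 : ℝ) :
    x2 ^ 2 / t ^ 2 ≤ y2 ^ 2 / s ^ 2 + (x2 - y2) ^ 2 / (t - s) ^ 2 := by
  have ht : 0 < t := hs.trans hst
  have hb : 0 < t - s := by linarith
  rw [div_add_div _ _ (by positivity) (by positivity), div_le_div_iff₀ (by positivity) (by positivity)]
  nlinarith [sq_nonneg ((t - s) ^ 2 * y2 - s ^ 2 * (x2 - y2)),
    mul_nonneg (mul_pos hs hb).le (sq_nonneg y2),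
    mul_nonneg (mul_pos hs hb).le (sq_nonneg (x2 - y2)),
    mul_nonneg (mul_nonneg (mul_pos hs hb).le (mul_pos hs hb).le) (sq_nonneg y2),
    mul_nonneg (mul_nonneg (mul_pos hs hb).le (mul_pos hs hb).le) (sq_nonneg (x2 - y2))]

lemma rpow_three_halves {b : ℝ} (hb : 0 < b) : b ^ ((3:ℝ)/2) = b * Real.sqrt b := by
  rw [show ((3:ℝ)/2) = 1 + 1/2 by norm_num, Real.rpow_add hb, Real.rpow_one, ← Real.sqrt_eq_rpow]

theorem stmt_17 :
    ∃ c > (0:ℝ), ∀ s t : ℝ, 0 < s → s < t → ∀ y : ℝ × ℝ,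
      (∫ x : ℝ × ℝ, K t x.1 x.2 * K (t - s) (x.1 - y.1) (x.2 - y.2)) ≥
        c * (s ^ ((3:ℝ) / 2) / t ^ ((3:ℝ) / 2)) * K s y.1 y.2 := by
  refine ⟨1/4, by norm_num, ?_⟩
  intro s t hs hst y
  obtain ⟨y1, y2⟩ := y
  have ht : 0 < t := hs.trans hst
  set b : ℝ := t - s with hbdef
  have hb : 0 < b := by simp only [hbdef]; linarith
  have hπ := Real.pi_pos
  set E : ℝ := Real.exp (-(y1 ^ 2 / s) - y2 ^ 2 / s ^ 2) with hE
  set P : ℝ := 1 / (2 * π * t ^ ((3:ℝ)/2)) * (1 / (2 * π * b ^ ((3:ℝ)/2))) * E with hP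
  have hPpos : 0 < P := by
    have : 0 < t ^ ((3:ℝ)/2) := Real.rpow_pos_of_pos ht _
    have : 0 < b ^ ((3:ℝ)/2) := Real.rpow_pos_of_pos hb _
    positivity
  set g : ℝ × ℝ → ℝ := fun x =>
    P * (Real.exp (-(2/b) * (x.1 - y1) ^ 2) * Real.exp (-(2/b^2) * (x.2 - y2) ^ 2)) with hg
  -- pointwise bound
  have hgle : ∀ x : ℝ × ℝ, g x ≤ K t x.1 x.2 * K b (x.1 - y1) (x.2 - y2) := by
    intro x
    have h1 := exp_bd1 hs hst x.1 y1
    have h2 := exp_bd2 hs hst x.2 y2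
    have hfeq : K t x.1 x.2 * K b (x.1 - y1) (x.2 - y2) =
        (1 / (2 * π * t ^ ((3:ℝ)/2)) * (1 / (2 * π * b ^ ((3:ℝ)/2)))) *
          Real.exp ((-(x.1 ^ 2 / t) - x.2 ^ 2 / t ^ 2) +
            (-((x.1 - y1) ^ 2 / b) - (x.2 - y2) ^ 2 / b ^ 2)) := by
      simp only [K, Real.exp_add]; ring
    have hgeq : g x =
        (1 / (2 * π * t ^ ((3:ℝ)/2)) * (1 / (2 * π * b ^ ((3:ℝ)/2)))) *
          Real.exp ((-(y1 ^ 2 / s) - y2 ^ 2 / s ^ 2) +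
            (-(2/b) * (x.1 - y1) ^ 2 + -(2/b^2) * (x.2 - y2) ^ 2)) := by
      simp only [hg, hP, hE, Real.exp_add]; ring
    rw [hfeq, hgeq]
    have hc : (0:ℝ) ≤ 1 / (2 * π * t ^ ((3:ℝ)/2)) * (1 / (2 * π * b ^ ((3:ℝ)/2))) := by
      have : 0 < t ^ ((3:ℝ)/2) := Real.rpow_pos_of_pos ht _
      have : 0 < b ^ ((3:ℝ)/2) := Real.rpow_pos_of_pos hb _
      positivity
    refine mul_le_mul_of_nonneg_left (Real.exp_le_exp.mpr ?_) hc
    have e1 : (2/b) * (x.1 - y1) ^ 2 = (x.1 - y1) ^ 2 / (t - s) + (x.1 - y1) ^ 2 / (t - s) := by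
      rw [hbdef]; ring
    have e2 : (2/b^2) * (x.2 - y2) ^ 2 =
        (x.2 - y2) ^ 2 / (t - s) ^ 2 + (x.2 - y2) ^ 2 / (t - s) ^ 2 := by
      rw [hbdef]; ring
    have e3 : (x.1 - y1) ^ 2 / b = (x.1 - y1) ^ 2 / (t - s) := by rw [hbdef]
    have e4 : (x.2 - y2) ^ 2 / b ^ 2 = (x.2 - y2) ^ 2 / (t - s) ^ 2 := by rw [hbdef]
    linarith [e1, e2, e3, e4]
  -- integrability of g
  have hg1 : Integrable (fun u : ℝ => Real.exp (-(2/b) * (u - y1) ^ 2)) :=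
    (integrable_exp_neg_mul_sq (by positivity : (0:ℝ) < 2/b)).comp_sub_right y1
  have hg2 : Integrable (fun u : ℝ => Real.exp (-(2/b^2) * (u - y2) ^ 2)) :=
    (integrable_exp_neg_mul_sq (by positivity : (0:ℝ) < 2/b^2)).comp_sub_right y2
  have hg_int : Integrable g := by
    apply Integrable.const_mul
    exact hg1.mul_prod hg2
  -- integrability of f
  have hf1 : Integrable (fun u : ℝ => Real.exp (-(u ^ 2 / t)) * Real.exp (-((u - y1) ^ 2 / b))) := by
    refine ((integrable_exp_neg_mul_sq (by positivity : (0:ℝ) < 1/t)).mono'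
      (Continuous.aestronglyMeasurable (by fun_prop)) ?_)
    filter_upwards with u
    rw [Real.norm_eq_abs, abs_of_pos (by positivity)]
    calc Real.exp (-(u ^ 2 / t)) * Real.exp (-((u - y1) ^ 2 / b))
        ≤ Real.exp (-(u ^ 2 / t)) * 1 := by
          refine mul_le_mul_of_nonneg_left (Real.exp_le_one_iff.mpr (neg_nonpos.mpr (by positivity))) (by positivity)
      _ = Real.exp (-(1/t) * u ^ 2) := by rw [mul_one]; congr 1; ring
  have hf2 : Integrable (fun u : ℝ => Real.exp (-(u ^ 2 / t ^ 2)) * Real.exp (-((u - y2) ^ 2 / b ^ 2))) := by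
    refine ((integrable_exp_neg_mul_sq (by positivity : (0:ℝ) < 1/t^2)).mono'
      (Continuous.aestronglyMeasurable (by fun_prop)) ?_)
    filter_upwards with u
    rw [Real.norm_eq_abs, abs_of_pos (by positivity)]
    calc Real.exp (-(u ^ 2 / t ^ 2)) * Real.exp (-((u - y2) ^ 2 / b ^ 2))
        ≤ Real.exp (-(u ^ 2 / t ^ 2)) * 1 := by
          refine mul_le_mul_of_nonneg_left (Real.exp_le_one_iff.mpr (neg_nonpos.mpr (by positivity))) (by positivity)
      _ = Real.exp (-(1/t^2) * u ^ 2) := by rw [mul_one]; congr 1; ring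
  have hfeq2 : (fun x : ℝ × ℝ => K t x.1 x.2 * K b (x.1 - y1) (x.2 - y2)) =
      fun x : ℝ × ℝ => (1 / (2 * π * t ^ ((3:ℝ)/2)) * (1 / (2 * π * b ^ ((3:ℝ)/2)))) *
        ((Real.exp (-(x.1 ^ 2 / t)) * Real.exp (-((x.1 - y1) ^ 2 / b))) *
         (Real.exp (-(x.2 ^ 2 / t ^ 2)) * Real.exp (-((x.2 - y2) ^ 2 / b ^ 2)))) := by
    funext x
    simp only [K]
    rw [show -(x.1 ^ 2 / t) - x.2 ^ 2 / t ^ 2 = -(x.1 ^ 2 / t) + -(x.2 ^ 2 / t ^ 2) from by ring,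
      show -((x.1 - y1) ^ 2 / b) - (x.2 - y2) ^ 2 / b ^ 2
        = -((x.1 - y1) ^ 2 / b) + -((x.2 - y2) ^ 2 / b ^ 2) from by ring,
      Real.exp_add, Real.exp_add]
    ring
  have hf_int : Integrable (fun x : ℝ × ℝ => K t x.1 x.2 * K b (x.1 - y1) (x.2 - y2)) := by
    rw [hfeq2]
    exact (hf1.mul_prod hf2).const_mul _
  -- compare integrals
  have hmono : (∫ x : ℝ × ℝ, g x) ≤ ∫ x : ℝ × ℝ, K t x.1 x.2 * K b (x.1 - y1) (x.2 - y2) :=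
    integral_mono hg_int hf_int hgle
  -- compute ∫ g
  have hI1 : (∫ u : ℝ, Real.exp (-(2/b) * (u - y1) ^ 2)) = Real.sqrt (π / (2/b)) := by
    rw [integral_sub_right_eq_self (fun u : ℝ => Real.exp (-(2/b) * u ^ 2)) y1]
    exact integral_gaussian _
  have hI2 : (∫ u : ℝ, Real.exp (-(2/b^2) * (u - y2) ^ 2)) = Real.sqrt (π / (2/b^2)) := by
    rw [integral_sub_right_eq_self (fun u : ℝ => Real.exp (-(2/b^2) * u ^ 2)) y2]
    exact integral_gaussian _
  have hgval : (∫ x : ℝ × ℝ, g x) = P * (π / 2 * (b * Real.sqrt b)) := by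
    have hprod := MeasureTheory.integral_prod_mul (μ := volume) (ν := volume)
      (fun u : ℝ => Real.exp (-(2/b) * (u - y1) ^ 2))
      (fun u : ℝ => Real.exp (-(2/b^2) * (u - y2) ^ 2))
    have : (∫ x : ℝ × ℝ, g x) = P * ((∫ u : ℝ, Real.exp (-(2/b) * (u - y1) ^ 2)) *
        (∫ u : ℝ, Real.exp (-(2/b^2) * (u - y2) ^ 2))) := by
      rw [MeasureTheory.integral_const_mul, MeasureTheory.Measure.volume_eq_prod, hprod]
    rw [this, hI1, hI2]
    congr 1
    rw [← Real.sqrt_mul (by positivity)]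
    rw [show π / (2/b) * (π / (2/b^2)) = (π / 2 * (b * Real.sqrt b)) ^ 2 from by
      rw [mul_pow, mul_pow, Real.sq_sqrt hb.le]; field_simp]
    exact Real.sqrt_sq (by positivity)
  -- final arithmetic
  rw [ge_iff_le]
  refine le_trans (le_of_eq ?_) (hgval ▸ hmono)
  simp only [K, hP, hE]
  rw [rpow_three_halves hb]
  have hts : (0:ℝ) < t ^ ((3:ℝ)/2) := Real.rpow_pos_of_pos ht _
  have hss : (0:ℝ) < s ^ ((3:ℝ)/2) := Real.rpow_pos_of_pos hs _
  have hsb : (0:ℝ) < Real.sqrt b := Real.sqrt_pos.mpr hb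
  field_simp
  ring
end
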